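/- arXiv:2305.07755 — 2 statements merged into one kernel-verified Lean document; each statement's English description precedes it below -/
import Mathlib

section
/- Let J be a real m×n matrix and L a real p×n matrix satisfying the completeness condition with constant γ > 0, let λ > 0 and F ∈ ℝᵐ, and let d solve (JᵀJ + λLᵀL)d = −JᵀF. Then the inner product of the gradient g = JᵀF with d satisfies gᵀd ≤ −γ·min{1, λ}·‖d‖². -/
open Matrix RealInnerProductSpace

/-- The continuous linear map on Euclidean spaces induced by a real matrix. -/
noncomputable def matCLM {m n : ℕ} (A : Matrix (Fin m) (Fin n) ℝ) :
    EuclideanSpace ℝ (Fin n) →L[ℝ] EuclideanSpace ℝ (Fin m) :=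
  LinearMap.toContinuousLinearMap (Matrix.toEuclideanLin A)


lemma matCLM_mul {a b c : ℕ} (A : Matrix (Fin a) (Fin b) ℝ) (B : Matrix (Fin b) (Fin c) ℝ)
    (v : EuclideanSpace ℝ (Fin c)) : matCLM (A*B) v = matCLM A (matCLM B v) := by
  simp only [matCLM, Matrix.toEuclideanLin_eq_toLin, LinearMap.coe_toContinuousLinearMap']
  exact Matrix.toLin_mul_apply _ (PiLp.basisFun 2 ℝ (Fin b)) _ A B v

lemma matCLM_adj {a b : ℕ} (A : Matrix (Fin a) (Fin b) ℝ) (u : EuclideanSpace ℝ (Fin a))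
    (v : EuclideanSpace ℝ (Fin b)) : ⟪matCLM Aᵀ u, v⟫ = ⟪u, matCLM A v⟫ := by
  have h : matCLM Aᵀ u = LinearMap.adjoint (Matrix.toEuclideanLin A) u := by
    rw [← Matrix.toEuclideanLin_conjTranspose_eq_adjoint,
      Matrix.conjTranspose_eq_transpose_of_trivial]; rfl
  rw [h, LinearMap.adjoint_inner_left]; rfl

lemma matCLM_add_smul {a b : ℕ} (A B : Matrix (Fin a) (Fin b) ℝ) (c : ℝ)
    (v : EuclideanSpace ℝ (Fin b)) : matCLM (A + c • B) v = matCLM A v + c • matCLM B v := by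
  simp [matCLM]

/-- under the completeness condition with constant `γ > 0`, if `d` solves
`(JᵀJ + λLᵀL)d = −JᵀF` then the gradient `g = JᵀF` satisfies
`gᵀd ≤ −γ·min{1, λ}·‖d‖²`. -/
theorem lmmss_descent_inequality
    (m n p : ℕ) (J : Matrix (Fin m) (Fin n) ℝ) (L : Matrix (Fin p) (Fin n) ℝ)
    (γ : ℝ) (hγ : 0 < γ)
    (hcomp : ∀ v : EuclideanSpace ℝ (Fin n),
      ‖matCLM J v‖ ^ 2 + ‖matCLM L v‖ ^ 2 ≥ γ * ‖v‖ ^ 2)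
    (lam : ℝ) (hlam : 0 < lam) (F : EuclideanSpace ℝ (Fin m))
    (d : EuclideanSpace ℝ (Fin n))
    (hd : matCLM (Jᵀ * J + lam • (Lᵀ * L)) d = -(matCLM Jᵀ F)) :
    ⟪matCLM Jᵀ F, d⟫ ≤ -(γ * min 1 lam * ‖d‖ ^ 2) := by
  have hg : matCLM Jᵀ F = -(matCLM (Jᵀ * J + lam • (Lᵀ * L)) d) := by
    rw [hd]; simp
  have h2 : ⟪matCLM (Jᵀ * J + lam • (Lᵀ * L)) d, d⟫
      = ‖matCLM J d‖ ^ 2 + lam * ‖matCLM L d‖ ^ 2 := by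
    rw [matCLM_add_smul, inner_add_left, real_inner_smul_left, matCLM_mul, matCLM_mul,
      matCLM_adj, matCLM_adj, real_inner_self_eq_norm_sq, real_inner_self_eq_norm_sq]
  have h3 : ⟪matCLM Jᵀ F, d⟫ = -(‖matCLM J d‖ ^ 2 + lam * ‖matCLM L d‖ ^ 2) := by
    rw [hg, inner_neg_left, h2]
  rw [h3]
  have hc := hcomp d
  have hmin1 : min 1 lam ≤ 1 := min_le_left _ _
  have hmin2 : min 1 lam ≤ lam := min_le_right _ _
  have hmin0 : 0 < min 1 lam := lt_min one_pos hlam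
  nlinarith [sq_nonneg ‖matCLM J d‖, sq_nonneg ‖matCLM L d‖, sq_nonneg ‖d‖]
end

section
/- Let F : ℝⁿ → ℝᵐ be continuously differentiable with Jacobian J(x), let L be a real p×n matrix, and let γ > 0 satisfy the completeness condition ‖J(x)v‖² + ‖Lv‖² ≥ γ‖v‖² for all v ∈ ℝⁿ and all x ∈ ℝⁿ. Let {x_k} ⊂ ℝⁿ be a sequence with F(x_k) ≠ 0 and ‖F(x_{k+1})‖ ≤ ‖F(x_k)‖ for all k, and let d_k solve (J(x_k)ᵀJ(x_k) + λ_k LᵀL)d_k = −J(x_k)ᵀF(x_k) with λ_k = ‖F(x_k)‖². Then {d_k} is gradient-related to {x_k} for φ(x) = ½‖F(x)‖²: for every subsequence {x_k}_{k∈K} converging to a point x∞ with ∇φ(x∞) ≠ 0, the subsequence {d_k}_{k∈K} is bounded and limsup_{k→∞, k∈K} ∇φ(x_k)ᵀd_k < 0. -/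
open Matrix Filter RealInnerProductSpace

lemma matCLM_add {m n : ℕ} (A B : Matrix (Fin m) (Fin n) ℝ) :
    matCLM (A + B) = matCLM A + matCLM B := by
  unfold matCLM; rw [map_add]; rfl

lemma matCLM_smul {m n : ℕ} (c : ℝ) (A : Matrix (Fin m) (Fin n) ℝ) :
    matCLM (c • A) = c • matCLM A := by
  unfold matCLM; rw [_root_.map_smul]; rfl

lemma matCLM_mul_s16 {m n q : ℕ} (A : Matrix (Fin m) (Fin n) ℝ) (B : Matrix (Fin n) (Fin q) ℝ) :
    matCLM (A * B) = (matCLM A).comp (matCLM B) := by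
  ext v i
  simp [matCLM, Matrix.toEuclideanLin_apply, Matrix.mulVec_mulVec]

lemma matCLM_transpose_inner {m n : ℕ} (A : Matrix (Fin m) (Fin n) ℝ)
    (u : EuclideanSpace ℝ (Fin m)) (v : EuclideanSpace ℝ (Fin n)) :
    ⟪matCLM Aᵀ u, v⟫ = ⟪u, matCLM A v⟫ := by
  have h : Aᵀ = Aᴴ := (Matrix.conjTranspose_eq_transpose_of_trivial A).symm
  rw [h]
  show ⟪(Matrix.toEuclideanLin Aᴴ) u, v⟫ = ⟪u, (Matrix.toEuclideanLin A) v⟫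
  rw [Matrix.toEuclideanLin_conjTranspose_eq_adjoint]
  exact LinearMap.adjoint_inner_left _ _ _

lemma matCLM_continuous {m n : ℕ} :
    Continuous (matCLM : Matrix (Fin m) (Fin n) ℝ → _) := by
  let e : Matrix (Fin m) (Fin n) ℝ →ₗ[ℝ]
      (EuclideanSpace ℝ (Fin n) →L[ℝ] EuclideanSpace ℝ (Fin m)) :=
    { toFun := matCLM, map_add' := matCLM_add, map_smul' := matCLM_smul }
  exact e.continuous_of_finiteDimensional


/-- under the completeness condition, for a sequence `{x_k}` with `F(x_k) ≠ 0`
and non-increasing residual norms, the LMMSS directions `{d_k}` (with `λ_k = ‖F(x_k)‖²`)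
are gradient-related to `{x_k}` for `φ(x) = ½‖F(x)‖²` (whose gradient is `J(x)ᵀF(x)`):
along every subsequence converging to a non-stationary point, the directions are bounded
and the limsup of `∇φ(x_k)ᵀd_k` is strictly negative. -/
theorem lmmss_directions_gradient_related
    (n m p : ℕ)
    (F : EuclideanSpace ℝ (Fin n) → EuclideanSpace ℝ (Fin m))
    (J : EuclideanSpace ℝ (Fin n) → Matrix (Fin m) (Fin n) ℝ)
    (hdiff : ∀ x, HasFDerivAt F (matCLM (J x)) x)
    (hJcont : Continuous J)
    (L : Matrix (Fin p) (Fin n) ℝ) (γ : ℝ) (hγ : 0 < γ)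
    (hcomp : ∀ (x : EuclideanSpace ℝ (Fin n)) (v : EuclideanSpace ℝ (Fin n)),
      ‖matCLM (J x) v‖ ^ 2 + ‖matCLM L v‖ ^ 2 ≥ γ * ‖v‖ ^ 2)
    (x d : ℕ → EuclideanSpace ℝ (Fin n))
    (hFk : ∀ k, F (x k) ≠ 0)
    (hmono : ∀ k, ‖F (x (k + 1))‖ ≤ ‖F (x k)‖)
    (hd : ∀ k,
      matCLM ((J (x k))ᵀ * J (x k) + ‖F (x k)‖ ^ 2 • (Lᵀ * L)) (d k) =
        -(matCLM (J (x k))ᵀ (F (x k)))) :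
    ∀ K : ℕ → ℕ, StrictMono K →
      ∀ xinf : EuclideanSpace ℝ (Fin n),
        Tendsto (fun k => x (K k)) atTop (nhds xinf) →
        matCLM (J xinf)ᵀ (F xinf) ≠ 0 →
        (∃ C : ℝ, ∀ k, ‖d (K k)‖ ≤ C) ∧
          limsup (fun k => ⟪matCLM (J (x (K k)))ᵀ (F (x (K k))), d (K k)⟫) atTop < 0 := by
  have hFc : Continuous F := by
    rw [continuous_iff_continuousAt]; exact fun y => (hdiff y).continuousAt
  have hFanti : Antitone (fun k => ‖F (x k)‖) := antitone_nat_of_succ_le hmono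
  have hLamAnti : Antitone (fun k => ‖F (x k)‖ ^ 2) := fun i j hij =>
    pow_le_pow_left₀ (norm_nonneg _) (hFanti hij) 2
  -- key identity
  have key : ∀ j, ⟪matCLM (J (x j))ᵀ (F (x j)), d j⟫ =
      -(‖matCLM (J (x j)) (d j)‖ ^ 2 + ‖F (x j)‖ ^ 2 * ‖matCLM L (d j)‖ ^ 2) := by
    intro j
    have h := hd j
    rw [matCLM_add, matCLM_mul_s16, matCLM_smul, matCLM_mul_s16] at h
    have h2 := congrArg (fun v => ⟪v, d j⟫) h
    simp only [ContinuousLinearMap.add_apply, ContinuousLinearMap.coe_comp',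
      Function.comp_apply, ContinuousLinearMap.coe_smul', Pi.smul_apply,
      inner_add_left, real_inner_smul_left, inner_neg_left] at h2
    rw [matCLM_transpose_inner, matCLM_transpose_inner,
      real_inner_self_eq_norm_sq, real_inner_self_eq_norm_sq] at h2
    linarith
  intro K hK xinf hx hg0
  have hFinf : F xinf ≠ 0 := by
    intro h; apply hg0; rw [h]; simp
  have hlam0 : (0:ℝ) < ‖F xinf‖ ^ 2 := pow_pos (norm_pos_iff.mpr hFinf) 2
  set lam := ‖F xinf‖ ^ 2 with hlamdef
  have hFx : Tendsto (fun k => F (x (K k))) atTop (nhds (F xinf)) :=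
    (hFc.tendsto xinf).comp hx
  have hLamLim : Tendsto (fun k => ‖F (x (K k))‖ ^ 2) atTop (nhds lam) := hFx.norm.pow 2
  have hLamGe : ∀ j, lam ≤ ‖F (x j)‖ ^ 2 := by
    intro j
    refine le_of_tendsto hLamLim ?_
    filter_upwards [eventually_ge_atTop j] with k hk
    exact hLamAnti (le_trans hk (hK.le_apply))
  set c := min 1 lam with hcdef
  have hc0 : 0 < c := lt_min one_pos hlam0
  have hc1 : c ≤ 1 := min_le_left _ _
  -- main inequality
  have ineq1 : ∀ j, ⟪matCLM (J (x j))ᵀ (F (x j)), d j⟫ ≤ -(c * γ * ‖d j‖ ^ 2) := by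
    intro j
    rw [key j]
    have hcl : c ≤ ‖F (x j)‖ ^ 2 := le_trans (min_le_right _ _) (hLamGe j)
    have h1 := mul_le_mul_of_nonneg_left (hcomp (x j) (d j)) hc0.le
    nlinarith [sq_nonneg ‖matCLM L (d j)‖, sq_nonneg ‖matCLM (J (x j)) (d j)‖,
      sq_nonneg ‖d j‖]
  -- uniform bound on c*γ*‖d j‖²
  have hdb : ∀ j, c * γ * ‖d j‖ ^ 2 ≤ ‖F (x j)‖ ^ 2 := by
    intro j
    have h1 : c * γ * ‖d j‖ ^ 2 ≤ -⟪matCLM (J (x j))ᵀ (F (x j)), d j⟫ := by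
      linarith [ineq1 j]
    have h2 : -⟪matCLM (J (x j))ᵀ (F (x j)), d j⟫ ≤
        ‖F (x j)‖ * ‖matCLM (J (x j)) (d j)‖ := by
      rw [matCLM_transpose_inner]
      have h3 := abs_real_inner_le_norm (F (x j)) (matCLM (J (x j)) (d j))
      have h4 := neg_abs_le ⟪F (x j), matCLM (J (x j)) (d j)⟫
      linarith
    have h5 : ‖matCLM (J (x j)) (d j)‖ ^ 2 ≤ ‖F (x j)‖ * ‖matCLM (J (x j)) (d j)‖ := by
      have hk := key j
      have h6 : (0:ℝ) ≤ ‖F (x j)‖ ^ 2 * ‖matCLM L (d j)‖ ^ 2 :=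
        mul_nonneg (sq_nonneg _) (sq_nonneg _)
      linarith
    nlinarith [sq_nonneg (‖F (x j)‖ - ‖matCLM (J (x j)) (d j)‖)]
  set C := Real.sqrt (‖F (x 0)‖ ^ 2 / (c * γ)) with hCdef
  have hCb : ∀ j, ‖d j‖ ≤ C := by
    intro j
    have h6 : ‖d j‖ ^ 2 ≤ ‖F (x 0)‖ ^ 2 / (c * γ) := by
      rw [le_div_iff₀ (mul_pos hc0 hγ)]
      have h7 : ‖F (x j)‖ ≤ ‖F (x 0)‖ := hFanti (Nat.zero_le _)
      nlinarith [hdb j, norm_nonneg (F (x j))]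
    calc ‖d j‖ = Real.sqrt (‖d j‖ ^ 2) := (Real.sqrt_sq (norm_nonneg _)).symm
      _ ≤ C := Real.sqrt_le_sqrt h6
  have hC0 : 0 ≤ C := Real.sqrt_nonneg _
  refine ⟨⟨C, fun k => hCb (K k)⟩, ?_⟩
  -- limsup part
  set g : ℕ → EuclideanSpace ℝ (Fin n) :=
    fun k => matCLM (J (x (K k)))ᵀ (F (x (K k))) with hgdef
  have happly : Continuous (fun q : (EuclideanSpace ℝ (Fin n) →L[ℝ] EuclideanSpace ℝ (Fin n)) × EuclideanSpace ℝ (Fin n) => q.1 q.2) :=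
    isBoundedBilinearMap_apply.continuous
  have happly2 : Continuous (fun q : (EuclideanSpace ℝ (Fin m) →L[ℝ] EuclideanSpace ℝ (Fin n)) × EuclideanSpace ℝ (Fin m) => q.1 q.2) :=
    isBoundedBilinearMap_apply.continuous
  have hφ : Continuous (fun y => matCLM (J y)ᵀ (F y)) :=
    happly2.comp (Continuous.prodMk
      (matCLM_continuous.comp hJcont.matrix_transpose) hFc)
  have hgt : Tendsto g atTop (nhds (matCLM (J xinf)ᵀ (F xinf))) :=
    (hφ.tendsto xinf).comp hx
  have hgnorm : Tendsto (fun k => ‖g k‖) atTop (nhds ‖matCLM (J xinf)ᵀ (F xinf)‖) :=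
    hgt.norm
  set ε := ‖matCLM (J xinf)ᵀ (F xinf)‖ with hεdef
  have hε0 : 0 < ε := norm_pos_iff.mpr hg0
  have hev1 : ∀ᶠ k in atTop, ε / 2 ≤ ‖g k‖ := by
    filter_upwards [hgnorm.eventually (eventually_gt_nhds (by linarith : ε / 2 < ε))]
      with k hk using hk.le
  -- operator norm bound
  have hAc : Continuous (fun y => matCLM ((J y)ᵀ * J y + ‖F y‖ ^ 2 • (Lᵀ * L))) :=
    matCLM_continuous.comp (((hJcont.matrix_transpose).matrix_mul hJcont).add
      ((hFc.norm.pow 2).smul continuous_const))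
  set Minf := ‖matCLM ((J xinf)ᵀ * J xinf + lam • (Lᵀ * L))‖ with hMdef
  have hMt : Tendsto (fun k => ‖matCLM ((J (x (K k)))ᵀ * J (x (K k)) +
      ‖F (x (K k))‖ ^ 2 • (Lᵀ * L))‖) atTop (nhds Minf) :=
    (((hAc.tendsto xinf).comp hx)).norm
  have hM0 : 0 < Minf + 1 := by positivity
  have hev2 : ∀ᶠ k in atTop, ‖matCLM ((J (x (K k)))ᵀ * J (x (K k)) +
      ‖F (x (K k))‖ ^ 2 • (Lᵀ * L))‖ ≤ Minf + 1 := by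
    filter_upwards [hMt.eventually (eventually_lt_nhds (by linarith : Minf < Minf + 1))]
      with k hk using hk.le
  set δ := (ε / 2) / (Minf + 1) with hδdef
  have hδ0 : 0 < δ := div_pos (by linarith) hM0
  have hev3 : ∀ᶠ k in atTop, δ ≤ ‖d (K k)‖ := by
    filter_upwards [hev1, hev2] with k h1 h2
    have h3 : ‖g k‖ ≤ (Minf + 1) * ‖d (K k)‖ := by
      have h4 := (matCLM ((J (x (K k)))ᵀ * J (x (K k)) +
        ‖F (x (K k))‖ ^ 2 • (Lᵀ * L))).le_opNorm (d (K k))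
      rw [hd (K k), norm_neg] at h4
      exact le_trans h4 (mul_le_mul_of_nonneg_right h2 (norm_nonneg _))
    rw [hδdef, div_le_iff₀ hM0]
    calc ε / 2 ≤ ‖g k‖ := h1
      _ ≤ (Minf + 1) * ‖d (K k)‖ := h3
      _ = ‖d (K k)‖ * (Minf + 1) := mul_comm _ _
  -- eventual upper bound on the inner products
  have hev4 : ∀ᶠ k in atTop,
      ⟪matCLM (J (x (K k)))ᵀ (F (x (K k))), d (K k)⟫ ≤ -(c * γ * δ ^ 2) := by
    filter_upwards [hev3] with k hk
    have h1 := ineq1 (K k)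
    have h2 : δ ^ 2 ≤ ‖d (K k)‖ ^ 2 := pow_le_pow_left₀ hδ0.le hk 2
    nlinarith [mul_pos hc0 hγ]
  -- coboundedness: the sequence is bounded below
  obtain ⟨bg, hbg⟩ := hgnorm.bddAbove_range
  have hbound : ∀ k, -(bg * C) ≤ ⟪matCLM (J (x (K k)))ᵀ (F (x (K k))), d (K k)⟫ := by
    intro k
    have h1 : ‖g k‖ ≤ bg := hbg ⟨k, rfl⟩
    have h2 := abs_real_inner_le_norm (g k) (d (K k))
    have h3 := neg_abs_le ⟪g k, d (K k)⟫
    have h4 : ‖g k‖ * ‖d (K k)‖ ≤ bg * C :=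
      mul_le_mul h1 (hCb (K k)) (norm_nonneg _) (le_trans (norm_nonneg _) h1)
    show -(bg * C) ≤ ⟪g k, d (K k)⟫
    linarith
  have hcb : IsCoboundedUnder (· ≤ ·) atTop
      (fun k => ⟪matCLM (J (x (K k)))ᵀ (F (x (K k))), d (K k)⟫) :=
    isCoboundedUnder_le_of_le _ hbound
  have hls := limsup_le_of_le hcb hev4
  have hfin : -(c * γ * δ ^ 2) < 0 := neg_neg_of_pos (by positivity)
  exact lt_of_le_of_lt hls hfin
end
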